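/- Let Y = [−1,1] ⊂ ℝ and, for x ∈ [−1,1], define S(x) := argmin_{y∈[−1,1]} x·y, the hyper-objective ψ(x) := min_{y∈S(x)} (x² + y²), and, for σ > 0, the penalized hyper-objective ψ_σ(x) := σ^{-1}( min_{y∈[−1,1]} (σ(x² + y²) + x·y) − min_{z∈[−1,1]} x·z ). Then: (i) ψ(x) = x² + 1 for every x ∈ [−1,1] with x ≠ 0, while ψ(0) = 0; consequently ψ is not continuous at 0; (ii) ψ_σ(0) = 0 for every σ > 0, and for every x ≠ 0 and every σ ∈ (0, |x|/2], ψ_σ(x) = x² + 1; in particular lim_{σ→0⁺} ψ_σ(x) = ψ(x) pointwise. -/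

import Mathlib

open Set Metric Filter

/-- Lower-level solution set `S(x) = argmin_{y ∈ [−1,1]} x·y` for `g(x,y) = x y`. -/
noncomputable def S18 (x : ℝ) : Set ℝ :=
  {y ∈ Icc (-1:ℝ) 1 | ∀ z ∈ Icc (-1:ℝ) 1, x * y ≤ x * z}

/-- Hyper-objective `ψ(x) = min_{y ∈ S(x)} (x² + y²)` for `f(x,y) = x² + y²`. -/
noncomputable def psi18 (x : ℝ) : ℝ :=
  sInf ((fun y => x ^ 2 + y ^ 2) '' S18 x)

/-- Penalized hyper-objective
`ψ_σ(x) = σ⁻¹ (min_{y∈[−1,1]} (σ(x²+y²) + x·y) − min_{z∈[−1,1]} x·z)`. -/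
noncomputable def psiSig18 (σ x : ℝ) : ℝ :=
  σ⁻¹ * (sInf ((fun y => σ * (x ^ 2 + y ^ 2) + x * y) '' Icc (-1:ℝ) 1)
    - sInf ((fun z => x * z) '' Icc (-1:ℝ) 1))

lemma sInf_image_Icc {f : ℝ → ℝ} {c : ℝ} (h1 : ∃ y ∈ Icc (-1:ℝ) 1, f y = c)
    (h2 : ∀ y ∈ Icc (-1:ℝ) 1, c ≤ f y) : sInf (f '' Icc (-1:ℝ) 1) = c := by
  obtain ⟨y0, hy0, hfy0⟩ := h1
  apply le_antisymm
  · exact csInf_le ⟨c, fun z ⟨y, hy, hz⟩ => hz ▸ h2 y hy⟩ ⟨y0, hy0, hfy0⟩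
  · exact le_csInf ⟨f y0, y0, hy0, rfl⟩ (fun z ⟨y, hy, hz⟩ => hz ▸ h2 y hy)

lemma S18_pos {x : ℝ} (hx : 0 < x) : S18 x = {-1} := by
  ext y
  simp only [S18, Set.mem_setOf_eq, Set.mem_singleton_iff, mem_Icc]
  constructor
  · rintro ⟨⟨h1, h2⟩, h⟩
    have := h (-1) ⟨le_refl _, by norm_num⟩
    nlinarith
  · rintro rfl
    refine ⟨⟨le_refl _, by norm_num⟩, fun z hz => ?_⟩
    nlinarith [hz.1]

lemma S18_neg {x : ℝ} (hx : x < 0) : S18 x = {1} := by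
  ext y
  simp only [S18, Set.mem_setOf_eq, Set.mem_singleton_iff, mem_Icc]
  constructor
  · rintro ⟨⟨h1, h2⟩, h⟩
    have := h 1 ⟨by norm_num, le_refl _⟩
    nlinarith
  · rintro rfl
    refine ⟨⟨by norm_num, le_refl _⟩, fun z hz => ?_⟩
    nlinarith [hz.2]

lemma S18_zero : S18 0 = Icc (-1:ℝ) 1 := by
  ext y; simp [S18]

lemma psi18_ne {x : ℝ} (hx : x ≠ 0) : psi18 x = x ^ 2 + 1 := by
  rcases hx.lt_or_gt with h | h
  · rw [psi18, S18_neg h, Set.image_singleton, csInf_singleton]; ring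
  · rw [psi18, S18_pos h, Set.image_singleton, csInf_singleton]; ring

lemma psi18_zero : psi18 0 = 0 := by
  rw [psi18, S18_zero]
  apply sInf_image_Icc
  · exact ⟨0, ⟨by norm_num, by norm_num⟩, by norm_num⟩
  · intro y hy; positivity

lemma psiSig18_ne {x : ℝ} (hx : x ≠ 0) {σ : ℝ} (hσ : 0 < σ) (hσ2 : σ ≤ |x| / 2) :
    psiSig18 σ x = x ^ 2 + 1 := by
  rcases hx.lt_or_gt with h | h
  · have habs : |x| = -x := abs_of_neg h
    rw [habs] at hσ2
    have h1 : sInf ((fun y => σ * (x ^ 2 + y ^ 2) + x * y) '' Icc (-1:ℝ) 1)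
        = σ * (x ^ 2 + 1) + x := by
      apply sInf_image_Icc
      · exact ⟨1, ⟨by norm_num, le_refl _⟩, by ring⟩
      · intro y hy
        obtain ⟨h1, h2⟩ := hy
        nlinarith [mul_nonneg (show (0:ℝ) ≤ 1 - y by linarith)
          (show (0:ℝ) ≤ σ * (-1 - y) - x by nlinarith)]
    have h2 : sInf ((fun z => x * z) '' Icc (-1:ℝ) 1) = x := by
      apply sInf_image_Icc
      · exact ⟨1, ⟨by norm_num, le_refl _⟩, by ring⟩
      · intro z hz; nlinarith [hz.2]
    rw [psiSig18, h1, h2]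
    field_simp
    ring
  · have habs : |x| = x := abs_of_pos h
    rw [habs] at hσ2
    have h1 : sInf ((fun y => σ * (x ^ 2 + y ^ 2) + x * y) '' Icc (-1:ℝ) 1)
        = σ * (x ^ 2 + 1) - x := by
      apply sInf_image_Icc
      · exact ⟨-1, ⟨le_refl _, by norm_num⟩, by ring⟩
      · intro y hy
        obtain ⟨h1, h2⟩ := hy
        nlinarith [mul_nonneg (show (0:ℝ) ≤ 1 + y by linarith)
          (show (0:ℝ) ≤ σ * (y - 1) + x by nlinarith)]
    have h2 : sInf ((fun z => x * z) '' Icc (-1:ℝ) 1) = -x := by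
      apply sInf_image_Icc
      · exact ⟨-1, ⟨le_refl _, by norm_num⟩, by ring⟩
      · intro z hz; nlinarith [hz.1]
    rw [psiSig18, h1, h2]
    field_simp
    ring

lemma psiSig18_zero {σ : ℝ} (hσ : 0 < σ) : psiSig18 σ 0 = 0 := by
  have h1 : sInf ((fun y => σ * ((0:ℝ) ^ 2 + y ^ 2) + 0 * y) '' Icc (-1:ℝ) 1) = 0 := by
    apply sInf_image_Icc
    · exact ⟨0, ⟨by norm_num, by norm_num⟩, by ring⟩
    · intro y hy
      have : 0 ≤ σ * ((0:ℝ) ^ 2 + y ^ 2) := by positivity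
      nlinarith
  have h2 : sInf ((fun z => (0:ℝ) * z) '' Icc (-1:ℝ) 1) = 0 := by
    apply sInf_image_Icc
    · exact ⟨0, ⟨by norm_num, by norm_num⟩, by ring⟩
    · intro z hz; simp
  rw [psiSig18, h1, h2]
  ring

theorem stmt18 :
    (∀ x ∈ Icc (-1:ℝ) 1, x ≠ 0 → psi18 x = x ^ 2 + 1) ∧
    psi18 0 = 0 ∧
    ¬ ContinuousWithinAt psi18 (Icc (-1:ℝ) 1) 0 ∧
    (∀ σ : ℝ, 0 < σ → psiSig18 σ 0 = 0) ∧
    (∀ x ∈ Icc (-1:ℝ) 1, x ≠ 0 → ∀ σ : ℝ, 0 < σ → σ ≤ |x| / 2 → psiSig18 σ x = x ^ 2 + 1) ∧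
    (∀ x ∈ Icc (-1:ℝ) 1,
      Tendsto (fun σ => psiSig18 σ x) (nhdsWithin 0 (Ioi 0)) (nhds (psi18 x))) := by
  refine ⟨fun x _ hx => psi18_ne hx, psi18_zero, ?_, fun σ hσ => psiSig18_zero hσ,
    fun x _ hx σ hσ hσ2 => psiSig18_ne hx hσ hσ2, ?_⟩
  · intro hcont
    have hψ0 : psi18 0 = 0 := psi18_zero
    rw [ContinuousWithinAt, hψ0] at hcont
    -- sequence u n = 1/(n+1)
    have hu : Tendsto (fun n : ℕ => (1 : ℝ) / (n + 1)) atTop (nhdsWithin 0 (Icc (-1:ℝ) 1)) := by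
      apply tendsto_nhdsWithin_of_tendsto_nhds_of_eventually_within
      · exact tendsto_one_div_add_atTop_nhds_zero_nat
      · filter_upwards with n
        have hpos : (0:ℝ) < 1 / (n + 1) := by positivity
        constructor
        · linarith
        · rw [div_le_one (by positivity)]
          linarith [Nat.cast_nonneg (α := ℝ) n]
    have htend := hcont.comp hu
    have hge : ∀ n : ℕ, (1:ℝ) ≤ psi18 ((1:ℝ) / (n + 1)) := by
      intro n
      have hne : (1:ℝ) / (n + 1) ≠ 0 := by positivity
      rw [psi18_ne hne]
      nlinarith [sq_nonneg ((1:ℝ) / (n + 1))]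
    have := htend.eventually (eventually_lt_nhds (show (0:ℝ) < 1 by norm_num))
    obtain ⟨n, hn⟩ := this.exists
    exact absurd (hge n) (not_le.mpr hn)
  · intro x hx
    rcases eq_or_ne x 0 with rfl | hne
    · rw [psi18_zero]
      apply Tendsto.congr' (f₁ := fun _ => (0:ℝ))
      · filter_upwards [self_mem_nhdsWithin] with σ hσ
        exact (psiSig18_zero hσ).symm
      · exact tendsto_const_nhds
    · rw [psi18_ne hne]
      apply Tendsto.congr' (f₁ := fun _ => x ^ 2 + 1)
      · have hmem : Ioo (0:ℝ) (|x| / 2) ∈ nhdsWithin 0 (Ioi 0) :=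
          Ioo_mem_nhdsGT_of_mem ⟨le_refl _, by positivity⟩
        filter_upwards [hmem] with σ hσ
        exact (psiSig18_ne hne hσ.1 hσ.2.le).symm
      · exact tendsto_const_nhds
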